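/- Let q₁ ∈ [2,∞], q₂ ∈ [1,∞), g ∈ L^{q₁}((0,1);[0,∞)), and let φ : (0,1) × ℝ → ℝ be measurable in the first variable and continuous in the second with |φ(r,ξ)| ≤ g(r)(1 + |ξ|^{q₂}) for all r ∈ (0,1) and ξ ∈ ℝ. Then for every p ∈ [2,∞) and every continuously differentiable x : [0,1] → ℝ with x(0) = x(1) = 0: ( ∫₀¹ φ(r,x(r))² dr )^{1/2} ≤ 2 ‖g‖_{q₁} ((p+2)/2)^{(2q₂−2+4/q₁)/(p+2)} (1 + ‖x‖₂^{1−2/q₁}) [ (1 + ‖x'‖₂²)(1 + ‖x‖_p^p) ]^{(q₂−1+2/q₁)/(p+2)}. -/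

import Mathlib

open Set MeasureTheory
open scoped ENNReal

private lemma nemy_finite : IsFiniteMeasure (volume.restrict (Ioo (0:ℝ) 1)) := by
  constructor
  rw [Measure.restrict_apply_univ, Real.volume_Ioo]
  exact ENNReal.ofReal_lt_top

private lemma nemy_univ : (volume.restrict (Ioo (0:ℝ) 1)) univ = 1 := by
  rw [Measure.restrict_apply_univ, Real.volume_Ioo]
  norm_num

private lemma nemy_ne_zero : (volume.restrict (Ioo (0:ℝ) 1)) ≠ 0 := by
  intro h
  have := nemy_univ
  rw [h] at this
  simp at this

private lemma nemy_memLp {f : ℝ → ℝ} (hf : ContinuousOn f (Icc 0 1)) (q : ℝ≥0∞) :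
    MemLp f q (volume.restrict (Ioo (0:ℝ) 1)) := by
  haveI := nemy_finite
  obtain ⟨C, hC⟩ := isCompact_Icc.exists_bound_of_continuousOn hf
  refine MemLp.of_bound ?_ C ?_
  · exact ((hf.mono Ioo_subset_Icc_self).aemeasurable measurableSet_Ioo).aestronglyMeasurable
  · filter_upwards [ae_restrict_mem measurableSet_Ioo] with r hr
    exact hC r (Ioo_subset_Icc_self hr)

private lemma nemy_eLpNorm_two {f : ℝ → ℝ} (hf : MemLp f 2 (volume.restrict (Ioo (0:ℝ) 1))) :
    eLpNorm f 2 (volume.restrict (Ioo (0:ℝ) 1))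
      = ENNReal.ofReal (Real.sqrt (∫ r in Ioo (0:ℝ) 1, (f r) ^ 2)) := by
  rw [hf.eLpNorm_eq_integral_rpow_norm (by norm_num) (by norm_num)]
  congr 1
  have h1 : ∀ r : ℝ, ‖f r‖ ^ ((2:ℝ≥0∞)).toReal = (f r) ^ 2 := by
    intro r
    rw [ENNReal.toReal_ofNat, show ((2:ℝ)) = ((2:ℕ):ℝ) by norm_num, Real.rpow_natCast]
    simp [Real.norm_eq_abs, sq_abs]
  simp_rw [h1]
  rw [Real.sqrt_eq_rpow]
  norm_num

private lemma nemy_aesm {φ : ℝ → ℝ → ℝ}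
    (hφmeas : ∀ ξ : ℝ, Measurable fun r => φ r ξ)
    (hφcont : ∀ r ∈ Ioo (0:ℝ) 1, Continuous (φ r))
    {x : ℝ → ℝ} (hx : AEMeasurable x (volume.restrict (Ioo (0:ℝ) 1))) :
    AEStronglyMeasurable (fun r => φ r (x r)) (volume.restrict (Ioo (0:ℝ) 1)) := by
  set ψ : ℝ → ℝ → ℝ := fun ξ r => if r ∈ Ioo (0:ℝ) 1 then φ r ξ else 0 with hψ
  have hmeas : Measurable (Function.uncurry ψ) := by
    refine measurable_uncurry_of_continuous_of_measurable (fun r => ?_) (fun ξ => ?_)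
    · by_cases hr : r ∈ Ioo (0:ℝ) 1
      · simpa only [ψ, if_pos hr] using hφcont r hr
      · simpa only [ψ, if_neg hr] using continuous_const
    · exact Measurable.ite measurableSet_Ioo (hφmeas ξ) measurable_const
  have h1 : AEMeasurable (fun r => ψ (x r) r) (volume.restrict (Ioo (0:ℝ) 1)) :=
    hmeas.comp_aemeasurable (hx.prodMk aemeasurable_id)
  refine (h1.congr ?_).aestronglyMeasurable
  filter_upwards [ae_restrict_mem measurableSet_Ioo] with r hr
  simp only [ψ, if_pos hr]

private lemma nemy_sup_bound {p : ℝ} (hp : 2 ≤ p) {x x' : ℝ → ℝ}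
    (hderiv : ∀ r ∈ Icc (0:ℝ) 1, HasDerivWithinAt x (x' r) (Icc (0:ℝ) 1) r)
    (hcont : ContinuousOn x' (Icc (0:ℝ) 1)) (hx0 : x 0 = 0)
    {r : ℝ} (hr : r ∈ Icc (0:ℝ) 1) :
    |x r| ≤ ((p + 2) / 2 * Real.sqrt (∫ s in Ioo (0:ℝ) 1, |x s| ^ p)
        * Real.sqrt (∫ s in Ioo (0:ℝ) 1, (x' s) ^ 2)) ^ (2 / (p + 2)) := by
  have hxc : ContinuousOn x (Icc 0 1) := fun s hs => (hderiv s hs).continuousWithinAt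
  set e : ℝ := (p + 2) / 4 with he
  have he1 : 1 ≤ e := by rw [he]; linarith
  set h : ℝ → ℝ := fun s => (x s ^ 2) ^ e with hh_def
  set h' : ℝ → ℝ := fun s => e * (x s ^ 2) ^ (e - 1) * (2 * x s * x' s) with hh'_def
  -- derivative
  have hh : ∀ s ∈ Icc (0:ℝ) 1, HasDerivWithinAt h (h' s) (Icc (0:ℝ) 1) s := by
    intro s hs
    have hu : HasDerivWithinAt (fun s => x s ^ 2) (2 * x s * x' s) (Icc (0:ℝ) 1) s := by
      have := (hderiv s hs).fun_pow 2
      refine this.congr_deriv ?_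
      push_cast
      ring
    exact (Real.hasDerivAt_rpow_const (p := e) (Or.inr he1)).comp_hasDerivWithinAt s hu
  -- continuity of h and h'
  have hx2 : ContinuousOn (fun s => x s ^ 2) (Icc (0:ℝ) 1) := hxc.pow 2
  have hconth : ContinuousOn h (Icc (0:ℝ) 1) :=
    hx2.rpow_const fun s _ => Or.inr (by linarith)
  have hconth' : ContinuousOn h' (Icc (0:ℝ) 1) := by
    refine (continuousOn_const.mul
        (hx2.rpow_const fun s _ => Or.inr (by linarith))).mul ?_
    exact (continuousOn_const.mul hxc).mul hcont
  obtain ⟨hr0, hr1⟩ := hr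
  -- FTC
  have key : ∫ s in (0:ℝ)..r, h' s = h r - h 0 := by
    refine intervalIntegral.integral_eq_sub_of_hasDeriv_right_of_le hr0
      (hconth.mono (Icc_subset_Icc le_rfl hr1)) (fun s hs => ?_) ?_
    · have hs1 : s ∈ Icc (0:ℝ) 1 := ⟨hs.1.le, (hs.2.trans_le hr1).le⟩
      exact ((hh s hs1).hasDerivAt (Icc_mem_nhds hs.1 (hs.2.trans_le hr1))).hasDerivWithinAt
    · exact (hconth'.mono (Icc_subset_Icc le_rfl hr1)).intervalIntegrable_of_Icc hr0
  have hho : h 0 = 0 := by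
    simp only [hh_def, hx0]
    rw [zero_pow (by norm_num), Real.zero_rpow (by positivity)]
  -- pointwise bound of h'
  set Φ : ℝ → ℝ := fun s => (p + 2) / 2 * (|x s| ^ (p / 2) * |x' s|) with hΦ_def
  have habs : ∀ s : ℝ, (x s ^ 2) ^ (e - 1) = |x s| ^ (2 * e - 2) := by
    intro s
    rw [← sq_abs, ← Real.rpow_natCast |x s| 2, ← Real.rpow_mul (abs_nonneg _)]
    congr 1
    push_cast
    ring
  have hpt : ∀ s : ℝ, h' s ≤ Φ s := by
    intro s
    have h1 : h' s ≤ |h' s| := le_abs_self _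
    have h2 : |h' s| = e * (|x s| ^ (2 * e - 2)) * (2 * |x s| * |x' s|) := by
      rw [hh'_def]
      simp only [abs_mul]
      rw [abs_of_nonneg (by linarith : (0:ℝ) ≤ e),
        abs_of_nonneg (Real.rpow_nonneg (sq_nonneg _) _), habs s,
        abs_of_nonneg (by norm_num : (0:ℝ) ≤ 2)]
    have h3 : |x s| ^ (2 * e - 2) * |x s| = |x s| ^ (p / 2) := by
      nth_rewrite 2 [← Real.rpow_one |x s|]
      rw [← Real.rpow_add_of_nonneg (abs_nonneg _) (by linarith) zero_le_one]
      congr 1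
      rw [he]; ring
    calc h' s ≤ |h' s| := h1
      _ = (p + 2) / 2 * (|x s| ^ (2 * e - 2) * |x s| * |x' s|) := by rw [h2, he]; ring
      _ = Φ s := by rw [h3, hΦ_def]
  have hΦcont : ContinuousOn Φ (Icc (0:ℝ) 1) := by
    refine continuousOn_const.mul (ContinuousOn.mul ?_ hcont.abs)
    exact hxc.abs.rpow_const fun s _ => Or.inr (by linarith)
  have hΦnonneg : ∀ s : ℝ, 0 ≤ Φ s := by
    intro s
    rw [hΦ_def]
    positivity
  -- integral comparison
  have hint1 : ∫ s in (0:ℝ)..r, h' s ≤ ∫ s in (0:ℝ)..r, Φ s := by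
    refine intervalIntegral.integral_mono_on hr0 ?_ ?_ fun s hs => hpt s
    · have : uIcc (0:ℝ) r = Icc 0 r := uIcc_of_le hr0
      exact (hconth'.mono (Icc_subset_Icc le_rfl hr1)).intervalIntegrable_of_Icc hr0
    · exact (hΦcont.mono (Icc_subset_Icc le_rfl hr1)).intervalIntegrable_of_Icc hr0
  have hint2 : ∫ s in (0:ℝ)..r, Φ s ≤ ∫ s in (0:ℝ)..1, Φ s := by
    refine intervalIntegral.integral_mono_interval le_rfl hr0 hr1 ?_
      (hΦcont.intervalIntegrable_of_Icc zero_le_one)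
    filter_upwards with s using hΦnonneg s
  -- Cauchy–Schwarz
  set P : ℝ := ∫ s in Ioo (0:ℝ) 1, |x s| ^ p with hP_def
  set D : ℝ := ∫ s in Ioo (0:ℝ) 1, (x' s) ^ 2 with hD_def
  have hCS : ∫ s in Ioo (0:ℝ) 1, |x s| ^ (p / 2) * |x' s| ≤ Real.sqrt P * Real.sqrt D := by
    have hconj : (2:ℝ).HolderConjugate 2 := Real.HolderConjugate.two_two
    have hf2 : MemLp (fun s => |x s| ^ (p / 2)) (ENNReal.ofReal 2)
        (volume.restrict (Ioo (0:ℝ) 1)) :=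
      nemy_memLp (hxc.abs.rpow_const fun s _ => Or.inr (by linarith)) _
    have hg2 : MemLp (fun s => |x' s|) (ENNReal.ofReal 2)
        (volume.restrict (Ioo (0:ℝ) 1)) := nemy_memLp hcont.abs _
    have := MeasureTheory.integral_mul_le_Lp_mul_Lq_of_nonneg hconj
      (Filter.Eventually.of_forall fun s => by positivity)
      (Filter.Eventually.of_forall fun s => abs_nonneg (x' s)) hf2 hg2
    refine this.trans (le_of_eq ?_)
    have e1 : ∫ s in Ioo (0:ℝ) 1, (|x s| ^ (p / 2)) ^ (2:ℝ) = P := by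
      rw [hP_def]
      refine integral_congr_ae (Filter.Eventually.of_forall fun s => ?_)
      show (|x s| ^ (p / 2)) ^ (2:ℝ) = |x s| ^ p
      rw [← Real.rpow_mul (abs_nonneg _)]
      congr 1
      ring
    have e2 : ∫ s in Ioo (0:ℝ) 1, |x' s| ^ (2:ℝ) = D := by
      rw [hD_def]
      refine integral_congr_ae (Filter.Eventually.of_forall fun s => ?_)
      show |x' s| ^ (2:ℝ) = (x' s) ^ 2
      rw [show ((2:ℝ)) = ((2:ℕ):ℝ) by norm_num, Real.rpow_natCast]
      exact sq_abs _
    rw [e1, e2, Real.sqrt_eq_rpow, Real.sqrt_eq_rpow]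
  -- combine
  have hB : h r ≤ (p + 2) / 2 * Real.sqrt P * Real.sqrt D := by
    have h5 : ∫ s in (0:ℝ)..1, Φ s
        = (p + 2) / 2 * ∫ s in Ioo (0:ℝ) 1, |x s| ^ (p / 2) * |x' s| := by
      rw [intervalIntegral.integral_of_le zero_le_one, integral_Ioc_eq_integral_Ioo,
        hΦ_def]
      exact integral_const_mul _ _
    have h6 : h r = ∫ s in (0:ℝ)..r, h' s := by rw [key, hho, sub_zero]
    calc h r = ∫ s in (0:ℝ)..r, h' s := h6
      _ ≤ ∫ s in (0:ℝ)..1, Φ s := (hint1.trans hint2)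
      _ = (p + 2) / 2 * ∫ s in Ioo (0:ℝ) 1, |x s| ^ (p / 2) * |x' s| := h5
      _ ≤ (p + 2) / 2 * (Real.sqrt P * Real.sqrt D) := by
          refine mul_le_mul_of_nonneg_left hCS (by linarith)
      _ = (p + 2) / 2 * Real.sqrt P * Real.sqrt D := by ring
  have hhr : h r = |x r| ^ ((p + 2) / 2) := by
    show (x r ^ 2) ^ e = _
    rw [← sq_abs, ← Real.rpow_natCast |x r| 2, ← Real.rpow_mul (abs_nonneg _)]
    congr 1
    push_cast
    rw [he]; ring
  have hfinal : |x r| = (|x r| ^ ((p + 2) / 2)) ^ (2 / (p + 2)) := by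
    rw [← Real.rpow_mul (abs_nonneg _)]
    rw [show (p + 2) / 2 * (2 / (p + 2)) = 1 by field_simp, Real.rpow_one]
  rw [hfinal]
  exact Real.rpow_le_rpow (Real.rpow_nonneg (abs_nonneg _) _)
    (by rw [← hhr]; exact hB) (by positivity)

set_option maxHeartbeats 1600000 in
/-- Under condition (Φ1), i.e. `|φ(r,ξ)| ≤ g(r)(1 + |ξ|^{q₂})` with
`g ∈ L^{q₁}(0,1)`, `q₁ ∈ [2,∞]`, `q₂ ∈ [1,∞)`, for every `p ∈ [2,∞)` and every `C¹`
function `x : [0,1] → ℝ` vanishing at the endpoints: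
`‖φ(·, x(·))‖₂ ≤ 2‖g‖_{q₁} ((p+2)/2)^{(2q₂-2+4/q₁)/(p+2)} (1 + ‖x‖₂^{1-2/q₁})
  [(1+‖x'‖₂²)(1+‖x‖_p^p)]^{(q₂-1+2/q₁)/(p+2)}`. -/
theorem nemytskii_L2_bound
    (q₁ : ℝ≥0∞) (hq₁ : 2 ≤ q₁) (q₂ : ℝ) (hq₂ : 1 ≤ q₂)
    (g : ℝ → ℝ) (hg : MemLp g q₁ (volume.restrict (Ioo (0:ℝ) 1)))
    (hgpos : ∀ r ∈ Ioo (0:ℝ) 1, 0 ≤ g r)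
    (φ : ℝ → ℝ → ℝ)
    (hφmeas : ∀ ξ : ℝ, Measurable fun r => φ r ξ)
    (hφcont : ∀ r ∈ Ioo (0:ℝ) 1, Continuous (φ r))
    (hφle : ∀ r ∈ Ioo (0:ℝ) 1, ∀ ξ : ℝ, |φ r ξ| ≤ g r * (1 + |ξ| ^ q₂))
    (p : ℝ) (hp : 2 ≤ p)
    (x x' : ℝ → ℝ)
    (hderiv : ∀ r ∈ Icc (0:ℝ) 1, HasDerivWithinAt x (x' r) (Icc (0:ℝ) 1) r)
    (hcont : ContinuousOn x' (Icc (0:ℝ) 1))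
    (hx0 : x 0 = 0) (hx1 : x 1 = 0) :
    Real.sqrt (∫ r in Ioo (0:ℝ) 1, (φ r (x r)) ^ 2) ≤
      2 * (eLpNorm g q₁ (volume.restrict (Ioo (0:ℝ) 1))).toReal
        * ((p + 2) / 2) ^ ((2 * q₂ - 2 + 4 * (q₁⁻¹).toReal) / (p + 2))
        * (1 + Real.sqrt (∫ r in Ioo (0:ℝ) 1, (x r) ^ 2) ^ (1 - 2 * (q₁⁻¹).toReal))
        * ((1 + ∫ r in Ioo (0:ℝ) 1, (x' r) ^ 2) * (1 + ∫ r in Ioo (0:ℝ) 1, |x r| ^ p))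
            ^ ((q₂ - 1 + 2 * (q₁⁻¹).toReal) / (p + 2)) := by
  haveI := nemy_finite
  set μ : Measure ℝ := volume.restrict (Ioo (0:ℝ) 1) with hμ_def
  have hμuniv : μ univ = 1 := nemy_univ
  have hμ0 : μ ≠ 0 := nemy_ne_zero
  set a : ℝ := (q₁⁻¹).toReal with ha_def
  have ha0 : 0 ≤ a := ENNReal.toReal_nonneg
  have ha : a ≤ 1 / 2 := by
    have h1 : q₁⁻¹ ≤ (2:ℝ≥0∞)⁻¹ := ENNReal.inv_le_inv' hq₁
    calc a ≤ ((2:ℝ≥0∞)⁻¹).toReal := ENNReal.toReal_mono (by simp) h1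
      _ = 1 / 2 := by rw [ENNReal.toReal_inv]; norm_num
  set β : ℝ := 1 - 2 * a with hβ_def
  have hβ0 : 0 ≤ β := by rw [hβ_def]; linarith
  have hβ1 : β ≤ 1 := by rw [hβ_def]; linarith
  set σ : ℝ := q₂ - 1 + 2 * a with hσ_def
  have hσ0 : 0 ≤ σ := by rw [hσ_def]; linarith
  have hp2 : (0:ℝ) < p + 2 := by linarith
  have hq₁0 : q₁ ≠ 0 := ((lt_of_lt_of_le (by norm_num) hq₁)).ne'
  have hq₁inv_ne_top : q₁⁻¹ ≠ ∞ := by simp [hq₁0]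
  have hofa : ENNReal.ofReal a = q₁⁻¹ := ENNReal.ofReal_toReal hq₁inv_ne_top
  have hq2_beta : q₁ = 2 → β = 0 := by
    intro h2
    have : a = 1 / 2 := by
      rw [ha_def, h2, ENNReal.toReal_inv]; norm_num
    rw [hβ_def, this]; ring
  have hbeta_pos : q₁ ≠ 2 → 0 < β := by
    intro hne
    rcases hβ0.lt_or_eq with h | h
    · exact h
    · exfalso
      have haeq : a = 1 / 2 := by rw [hβ_def] at h; linarith
      have : q₁⁻¹ = (2:ℝ≥0∞)⁻¹ := by
        rw [← hofa, haeq, show (1/2:ℝ) = (2:ℝ)⁻¹ by norm_num,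
          ENNReal.ofReal_inv_of_pos two_pos]
        norm_num
      exact hne (inv_injective this)
  -- continuity / sup bound
  have hxc : ContinuousOn x (Icc 0 1) := fun s hs => (hderiv s hs).continuousWithinAt
  set P : ℝ := ∫ s in Ioo (0:ℝ) 1, |x s| ^ p with hP_def
  set D : ℝ := ∫ s in Ioo (0:ℝ) 1, (x' s) ^ 2 with hD_def
  set X₂ : ℝ := Real.sqrt (∫ s in Ioo (0:ℝ) 1, (x s) ^ 2) with hX₂_def
  have hP0 : 0 ≤ P := by
    rw [hP_def]; exact integral_nonneg fun s => Real.rpow_nonneg (abs_nonneg _) _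
  have hD0 : 0 ≤ D := by
    rw [hD_def]; exact integral_nonneg fun s => sq_nonneg _
  have hX₂0 : 0 ≤ X₂ := Real.sqrt_nonneg _
  set B : ℝ := (p + 2) / 2 * Real.sqrt P * Real.sqrt D with hB_def
  have hB0 : 0 ≤ B := by rw [hB_def]; positivity
  set C : ℝ := B ^ (2 / (p + 2)) with hC_def
  have hC0 : 0 ≤ C := Real.rpow_nonneg hB0 _
  set c : ℝ := C ^ σ with hc_def
  have hc0 : 0 ≤ c := Real.rpow_nonneg hC0 _
  have hsup : ∀ r ∈ Icc (0:ℝ) 1, |x r| ≤ C := fun r hr =>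
    nemy_sup_bound hp hderiv hcont hx0 hr
  -- exponent t
  set t : ℝ≥0∞ := if q₁ = 2 then (∞:ℝ≥0∞) else ENNReal.ofReal (2 / β) with ht_def
  have hpqr : (1:ℝ≥0∞) / 2 = 1 / q₁ + 1 / t := by
    by_cases hq2 : q₁ = 2
    · rw [ht_def, if_pos hq2, hq2]
      simp
    · have hβp := hbeta_pos hq2
      have h1t : (1:ℝ≥0∞) / t = ENNReal.ofReal (β / 2) := by
        rw [ht_def, if_neg hq2, one_div,
          ← ENNReal.ofReal_inv_of_pos (by positivity : (0:ℝ) < 2 / β)]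
        congr 1
        rw [inv_div]
      have h1q : (1:ℝ≥0∞) / q₁ = ENNReal.ofReal a := by rw [one_div, ← hofa]
      rw [h1t, h1q, ← ENNReal.ofReal_add ha0 (by positivity),
        show a + β / 2 = 1 / 2 by rw [hβ_def]; ring,
        show (1/2:ℝ) = (2:ℝ)⁻¹ by norm_num, ENNReal.ofReal_inv_of_pos two_pos,
        one_div]
      norm_num
  have ht1 : 1 ≤ t := by
    by_cases hq2 : q₁ = 2
    · rw [ht_def, if_pos hq2]; exact le_top
    · have hβp := hbeta_pos hq2
      rw [ht_def, if_neg hq2, ← ENNReal.ofReal_one]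
      exact ENNReal.ofReal_le_ofReal ((one_le_div hβp).mpr (by linarith))
  have ht0 : t ≠ 0 := by
    by_cases hq2 : q₁ = 2
    · rw [ht_def, if_pos hq2]; exact ENNReal.top_ne_zero
    · have hβp := hbeta_pos hq2
      rw [ht_def, if_neg hq2]
      simp only [ne_eq, ENNReal.ofReal_eq_zero, not_le]
      positivity
  -- L² facts
  have hmemx : MemLp x 2 μ := nemy_memLp hxc 2
  have hX₂e : eLpNorm x 2 μ = ENNReal.ofReal X₂ := by
    rw [nemy_eLpNorm_two hmemx, hX₂_def]
  have hrpow : eLpNorm (fun r => |x r| ^ β) t μ ≤ ENNReal.ofReal (X₂ ^ β) := by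
    by_cases hq2 : q₁ = 2
    · have hβz : β = 0 := hq2_beta hq2
      have heq : (fun r : ℝ => |x r| ^ β) = fun _ : ℝ => (1:ℝ) := by
        funext r; rw [hβz, Real.rpow_zero]
      rw [heq, hβz, Real.rpow_zero, eLpNorm_const (1:ℝ) ht0 hμ0, hμuniv]
      simp
    · have hβp := hbeta_pos hq2
      have h2 : t * ENNReal.ofReal β = 2 := by
        rw [ht_def, if_neg hq2, ← ENNReal.ofReal_mul (by positivity : (0:ℝ) ≤ 2 / β),
          div_mul_cancel₀ _ hβp.ne']
        norm_num
      calc eLpNorm (fun r => |x r| ^ β) t μ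
          = eLpNorm (fun r => ‖x r‖ ^ β) t μ := rfl
        _ = eLpNorm x (t * ENNReal.ofReal β) μ ^ β := eLpNorm_norm_rpow x hβp
        _ = (ENNReal.ofReal X₂) ^ β := by rw [h2, hX₂e]
        _ ≤ ENNReal.ofReal (X₂ ^ β) := le_of_eq (ENNReal.ofReal_rpow_of_nonneg hX₂0 hβ0)
  -- measurability of the composition
  have hxaem : AEMeasurable x μ :=
    (hxc.mono Ioo_subset_Icc_self).aemeasurable measurableSet_Ioo
  set f : ℝ → ℝ := fun r => φ r (x r) with hf_def
  have hfm : AEStronglyMeasurable f μ := nemy_aesm hφmeas hφcont hxaem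
  set h : ℝ → ℝ := fun r => 1 + c * |x r| ^ β with hh_def
  have hhc : ContinuousOn h (Icc (0:ℝ) 1) := by
    refine continuousOn_const.add (continuousOn_const.mul ?_)
    exact hxc.abs.rpow_const fun s _ => Or.inr hβ0
  have hhm : AEStronglyMeasurable h μ :=
    ((hhc.mono Ioo_subset_Icc_self).aemeasurable measurableSet_Ioo).aestronglyMeasurable
  -- step 1 : pointwise domination
  have step1 : eLpNorm f 2 μ ≤ eLpNorm (fun r => g r * h r) 2 μ := by
    refine eLpNorm_mono_ae ?_
    filter_upwards [ae_restrict_mem measurableSet_Ioo] with r hr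
    have h1 : |φ r (x r)| ≤ g r * (1 + |x r| ^ q₂) := hφle r hr (x r)
    have h2 : |x r| ^ q₂ ≤ c * |x r| ^ β := by
      have e1 : |x r| ^ q₂ = |x r| ^ σ * |x r| ^ β := by
        rw [← Real.rpow_add_of_nonneg (abs_nonneg _) hσ0 hβ0]
        congr 1
        rw [hσ_def, hβ_def]; ring
      rw [e1]
      refine mul_le_mul_of_nonneg_right ?_ (Real.rpow_nonneg (abs_nonneg _) _)
      calc |x r| ^ σ ≤ C ^ σ :=
            Real.rpow_le_rpow (abs_nonneg _) (hsup r (Ioo_subset_Icc_self hr)) hσ0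
        _ = c := by rw [hc_def]
    have h3 : g r * (1 + |x r| ^ q₂) ≤ g r * h r := by
      refine mul_le_mul_of_nonneg_left ?_ (hgpos r hr)
      rw [hh_def]
      simp only
      linarith
    calc ‖f r‖ = |φ r (x r)| := by rw [hf_def, Real.norm_eq_abs]
      _ ≤ g r * h r := h1.trans h3
      _ ≤ ‖g r * h r‖ := le_abs_self _
  -- step 2 : Hölder
  have step2 : eLpNorm (fun r => g r * h r) 2 μ ≤ eLpNorm g q₁ μ * eLpNorm h t μ := by
    haveI : ENNReal.HolderTriple q₁ t 2 := ⟨by simpa only [one_div] using hpqr.symm⟩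
    have := eLpNorm_smul_le_mul_eLpNorm (f := h) (φ := g) hhm hg.1 (p := q₁) (q := t) (r := 2)
    exact this
  -- step 3 : triangle inequality at exponent t
  have step3 : eLpNorm h t μ ≤ 1 + ENNReal.ofReal (c * X₂ ^ β) := by
    have hdecomp : h = (fun _ : ℝ => (1:ℝ)) + fun r => c * |x r| ^ β := rfl
    have haesm2 : AEStronglyMeasurable (fun r => c * |x r| ^ β) μ := by
      have : ContinuousOn (fun r => c * |x r| ^ β) (Icc (0:ℝ) 1) :=
        continuousOn_const.mul (hxc.abs.rpow_const fun s _ => Or.inr hβ0)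
      exact ((this.mono Ioo_subset_Icc_self).aemeasurable measurableSet_Ioo).aestronglyMeasurable
    calc eLpNorm h t μ
        ≤ eLpNorm (fun _ : ℝ => (1:ℝ)) t μ + eLpNorm (fun r => c * |x r| ^ β) t μ := by
          rw [hdecomp]
          exact eLpNorm_add_le aestronglyMeasurable_const haesm2 ht1
      _ ≤ 1 + ENNReal.ofReal (c * X₂ ^ β) := by
          refine add_le_add (le_of_eq ?_) ?_
          · rw [eLpNorm_const (1:ℝ) ht0 hμ0, hμuniv]
            simp
          · have hsm : (fun r : ℝ => c * |x r| ^ β) = c • fun r : ℝ => |x r| ^ β := rfl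
            rw [hsm, eLpNorm_const_smul, Real.enorm_eq_ofReal hc0,
              ENNReal.ofReal_mul hc0]
            exact mul_le_mul_right hrpow _
  -- combine the eLpNorm estimates
  have hGne : eLpNorm g q₁ μ ≠ ∞ := hg.2.ne
  have hchain : eLpNorm f 2 μ ≤ eLpNorm g q₁ μ * ENNReal.ofReal (1 + c * X₂ ^ β) := by
    have : (1:ℝ≥0∞) + ENNReal.ofReal (c * X₂ ^ β) = ENNReal.ofReal (1 + c * X₂ ^ β) := by
      rw [ENNReal.ofReal_add zero_le_one (by positivity), ENNReal.ofReal_one]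
    calc eLpNorm f 2 μ ≤ eLpNorm g q₁ μ * eLpNorm h t μ := step1.trans step2
      _ ≤ eLpNorm g q₁ μ * (1 + ENNReal.ofReal (c * X₂ ^ β)) := mul_le_mul_right step3 _
      _ = eLpNorm g q₁ μ * ENNReal.ofReal (1 + c * X₂ ^ β) := by rw [this]
  have hmemf : MemLp f 2 μ :=
    ⟨hfm, lt_of_le_of_lt hchain (ENNReal.mul_lt_top hg.2 ENNReal.ofReal_lt_top)⟩
  -- convert to real numbers
  have hfin : eLpNorm g q₁ μ * ENNReal.ofReal (1 + c * X₂ ^ β) ≠ ∞ :=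
    ENNReal.mul_ne_top hGne ENNReal.ofReal_ne_top
  have hreal : Real.sqrt (∫ r in Ioo (0:ℝ) 1, (f r) ^ 2)
      ≤ (eLpNorm g q₁ μ).toReal * (1 + c * X₂ ^ β) := by
    have h1 : (eLpNorm f 2 μ).toReal
        ≤ (eLpNorm g q₁ μ * ENNReal.ofReal (1 + c * X₂ ^ β)).toReal :=
      ENNReal.toReal_mono hfin hchain
    rw [ENNReal.toReal_mul, ENNReal.toReal_ofReal (by positivity)] at h1
    rw [nemy_eLpNorm_two hmemf, ENNReal.toReal_ofReal (Real.sqrt_nonneg _)] at h1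
    exact h1
  -- final real-number algebra
  set J : ℝ := (eLpNorm g q₁ μ).toReal with hJ_def
  have hJ0 : 0 ≤ J := ENNReal.toReal_nonneg
  set M : ℝ := ((p + 2) / 2) ^ ((2 * q₂ - 2 + 4 * a) / (p + 2)) with hM_def
  set θ : ℝ := σ / (p + 2) with hθ_def
  have hθ0 : 0 ≤ θ := by rw [hθ_def]; positivity
  set N : ℝ := ((1 + D) * (1 + P)) ^ θ with hN_def
  have hM1 : 1 ≤ M := by
    rw [hM_def]
    calc (1:ℝ) = 1 ^ ((2 * q₂ - 2 + 4 * a) / (p + 2)) := (Real.one_rpow _).symm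
      _ ≤ ((p + 2) / 2) ^ ((2 * q₂ - 2 + 4 * a) / (p + 2)) :=
          Real.rpow_le_rpow zero_le_one (by linarith)
            (div_nonneg (by linarith) (by linarith))
  have hN1 : 1 ≤ N := by
    rw [hN_def]
    calc (1:ℝ) = 1 ^ θ := (Real.one_rpow _).symm
      _ ≤ ((1 + D) * (1 + P)) ^ θ :=
          Real.rpow_le_rpow zero_le_one (by nlinarith) hθ0
  have hcMN : c ≤ M * N := by
    have e1 : c = B ^ (2 / (p + 2) * σ) := by
      rw [hc_def, hC_def, ← Real.rpow_mul hB0]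
    have e2 : B ^ (2 / (p + 2) * σ)
        = ((p + 2) / 2) ^ (2 / (p + 2) * σ)
          * ((Real.sqrt P) ^ (2 / (p + 2) * σ) * (Real.sqrt D) ^ (2 / (p + 2) * σ)) := by
      rw [hB_def, Real.mul_rpow (mul_nonneg (by linarith) (Real.sqrt_nonneg _)) (Real.sqrt_nonneg _),
        Real.mul_rpow (by linarith) (Real.sqrt_nonneg _)]
      ring
    have e3 : ((p + 2) / 2) ^ (2 / (p + 2) * σ) = M := by
      rw [hM_def]
      congr 1
      rw [hσ_def]
      field_simp
      ring
    have e4 : (Real.sqrt P) ^ (2 / (p + 2) * σ) ≤ (1 + P) ^ θ := by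
      rw [Real.sqrt_eq_rpow, ← Real.rpow_mul hP0]
      have : 1 / 2 * (2 / (p + 2) * σ) = θ := by
        rw [hθ_def]; field_simp
      rw [this]
      exact Real.rpow_le_rpow hP0 (by linarith) hθ0
    have e5 : (Real.sqrt D) ^ (2 / (p + 2) * σ) ≤ (1 + D) ^ θ := by
      rw [Real.sqrt_eq_rpow, ← Real.rpow_mul hD0]
      have : 1 / 2 * (2 / (p + 2) * σ) = θ := by
        rw [hθ_def]; field_simp
      rw [this]
      exact Real.rpow_le_rpow hD0 (by linarith) hθ0
    calc c = ((p + 2) / 2) ^ (2 / (p + 2) * σ)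
          * ((Real.sqrt P) ^ (2 / (p + 2) * σ) * (Real.sqrt D) ^ (2 / (p + 2) * σ)) := by
          rw [e1, e2]
      _ ≤ ((p + 2) / 2) ^ (2 / (p + 2) * σ) * ((1 + P) ^ θ * (1 + D) ^ θ) := by
          refine mul_le_mul_of_nonneg_left ?_ (Real.rpow_nonneg (by linarith) _)
          exact mul_le_mul e4 e5 (Real.rpow_nonneg (Real.sqrt_nonneg _) _)
            (Real.rpow_nonneg (by linarith) _)
      _ = M * N := by
          rw [e3, hN_def, Real.mul_rpow (by linarith) (by linarith)]
          ring
  have hXβ0 : 0 ≤ X₂ ^ β := Real.rpow_nonneg hX₂0 _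
  have hkey : 1 + c * X₂ ^ β ≤ 2 * M * (1 + X₂ ^ β) * N := by
    have h1 : 1 ≤ M * N := by nlinarith
    have h2 : c * X₂ ^ β ≤ M * N * X₂ ^ β :=
      mul_le_mul_of_nonneg_right hcMN hXβ0
    nlinarith [mul_nonneg (mul_nonneg (by linarith : (0:ℝ) ≤ M * N) hXβ0) zero_le_one]
  -- finish
  calc Real.sqrt (∫ r in Ioo (0:ℝ) 1, (φ r (x r)) ^ 2)
      ≤ J * (1 + c * X₂ ^ β) := hreal
    _ ≤ J * (2 * M * (1 + X₂ ^ β) * N) := mul_le_mul_of_nonneg_left hkey hJ0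
    _ = 2 * J * M * (1 + X₂ ^ β) * N := by ring
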